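/- Let M = 2 and let a₀⋯a_{n−1} ∈ {L,R}^n be a word with an odd number of R's, where J_L = diag(2,1) and J_R = ((0,−2),(1,0)). Then the product J_{a_{n−1}} ⋯ J_{a_0} has no real eigenvalues; its eigenvalues are a pair of complex conjugates ±i·s for some real s > 1. -/
import Mathlib

open Matrix

lemma count_ofFn_true : ∀ (n : ℕ) (a : Fin n → Bool),
    (List.ofFn a).count true = (Finset.univ.filter fun k => a k = true).card
  | 0, a => by simp
  | (n+1), a => by
    have ih := count_ofFn_true n (fun i => a i.succ)
    have hc : (Finset.univ.filter fun k : Fin (n+1) => a k = true).card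
        = (if a 0 = true then 1 else 0)
          + (Finset.univ.filter fun k : Fin n => a k.succ = true).card := by
      rw [Finset.card_filter, Fin.sum_univ_succ, ← Finset.card_filter]
    rw [List.ofFn_succ, List.count_cons, ih, hc]
    cases h : a 0 <;> simp [h, Nat.add_comm]

noncomputable def g : Bool → Matrix (Fin 2) (Fin 2) ℝ :=
  fun b => if b then !![(0 : ℝ), -2; 1, 0] else !![(2 : ℝ), 0; 0, 1]

lemma key : ∀ l : List Bool,
    (Odd (l.count true) → ∃ x y : ℝ, x * y = -(2 ^ l.length) ∧ (l.map g).prod = !![0, x; y, 0]) ∧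
    (¬ Odd (l.count true) → ∃ p q : ℝ, p * q = 2 ^ l.length ∧ (l.map g).prod = !![p, 0; 0, q])
  | [] => by
    constructor
    · simp
    · intro _; exact ⟨1, 1, by norm_num, by simp [Matrix.one_fin_two]⟩
  | (b :: l) => by
    obtain ⟨hodd, heven⟩ := key l
    constructor <;> intro h <;> cases b <;>
      simp only [List.count_cons, List.map_cons, List.prod_cons, List.length_cons,
        cond_true, cond_false, beq_iff_eq] at h ⊢
    · -- b = false, now count odd
      obtain ⟨x, y, hxy, hp⟩ := hodd (by simpa using h)
      exact ⟨2 * x, y, by push_cast; ring_nf; ring_nf at hxy; linarith, by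
        simp [g, hp, Matrix.mul_fin_two]⟩
    · -- b = true, count + 1 odd, so count even
      obtain ⟨p, q, hpq, hp⟩ := heven (by simpa [Nat.odd_add_one] using h)
      exact ⟨-2 * q, p, by push_cast; ring_nf; ring_nf at hpq; linarith, by
        simp [g, hp, Matrix.mul_fin_two]⟩
    · -- b = false, count even
      obtain ⟨p, q, hpq, hp⟩ := heven (by simpa using h)
      exact ⟨2 * p, q, by push_cast; ring_nf; ring_nf at hpq; linarith, by
        simp [g, hp, Matrix.mul_fin_two]⟩
    · -- b = true, count+1 even so count odd
      obtain ⟨x, y, hxy, hp⟩ := hodd (by simpa [Nat.odd_add_one] using h)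
      exact ⟨-2 * y, x, by push_cast; ring_nf; ring_nf at hxy; linarith, by
        simp [g, hp, Matrix.mul_fin_two]⟩
open Matrix

lemma spec_complex (x y s : ℝ) (hs : 0 < s) (h : x * y = -(s ^ 2)) :
    spectrum ℂ ((!![(0:ℝ), x; y, 0]).map Complex.ofReal)
      = {Complex.I * (s : ℂ), -(Complex.I * (s : ℂ))} := by
  have hmap : (!![(0:ℝ), x; y, 0]).map Complex.ofReal = !![(0:ℂ), x; y, 0] := by
    ext i j; fin_cases i <;> fin_cases j <;> simp
  rw [hmap]
  have hxy : (x : ℂ) * y = -((s:ℂ) ^ 2) := by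
    rw [← Complex.ofReal_mul, h]; push_cast; ring
  ext μ
  rw [spectrum.mem_iff, Matrix.isUnit_iff_isUnit_det, isUnit_iff_ne_zero, not_not]
  have halg : (algebraMap ℂ (Matrix (Fin 2) (Fin 2) ℂ)) μ - !![(0:ℂ), x; y, 0]
      = !![μ, -x; -y, μ] := by
    rw [Algebra.algebraMap_eq_smul_one]
    ext i j; fin_cases i <;> fin_cases j <;> simp [Matrix.one_fin_two]
  rw [halg, Matrix.det_fin_two_of]
  constructor
  · intro hd
    have hsq : μ * μ = (Complex.I * s) * (Complex.I * s) := by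
      linear_combination hd + hxy - (s:ℂ)^2 * Complex.I_mul_I
    rcases mul_self_eq_mul_self_iff.mp hsq with h1 | h1 <;> simp [h1]
  · intro hm
    simp only [Set.mem_insert_iff, Set.mem_singleton_iff] at hm
    rcases hm with h1 | h1 <;> subst h1 <;>
      linear_combination (-(1:ℂ)) * hxy + (s:ℂ)^2 * Complex.I_mul_I

lemma spec_real (x y s : ℝ) (hs : 0 < s) (h : x * y = -(s ^ 2)) :
    spectrum ℝ (!![(0:ℝ), x; y, 0]) = ∅ := by
  ext μ
  rw [spectrum.mem_iff, Matrix.isUnit_iff_isUnit_det, isUnit_iff_ne_zero, not_not]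
  have halg : (algebraMap ℝ (Matrix (Fin 2) (Fin 2) ℝ)) μ - !![(0:ℝ), x; y, 0]
      = !![μ, -x; -y, μ] := by
    rw [Algebra.algebraMap_eq_smul_one]
    ext i j; fin_cases i <;> fin_cases j <;> simp [Matrix.one_fin_two]
  rw [halg, Matrix.det_fin_two_of]
  simp only [Set.mem_empty_iff_false, iff_false]
  nlinarith [sq_nonneg μ, sq_nonneg s, mul_pos hs hs]

theorem product_odd_twist_eigenvalues (n : ℕ) (a : Fin n → Bool)
    (ht : Odd (Finset.univ.filter fun k => a k = true).card) :
    ∃ s : ℝ, 1 < s ∧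
      spectrum ℂ
        (((List.ofFn fun k : Fin n =>
            if a k then !![(0 : ℝ), -2; 1, 0] else !![(2 : ℝ), 0; 0, 1]).reverse.prod).map
          Complex.ofReal)
        = {Complex.I * (s : ℂ), -(Complex.I * (s : ℂ))} ∧
      spectrum ℝ
        ((List.ofFn fun k : Fin n =>
            if a k then !![(0 : ℝ), -2; 1, 0] else !![(2 : ℝ), 0; 0, 1]).reverse.prod)
        = ∅ := by
  have hlist : (List.ofFn fun k : Fin n =>
      if a k then !![(0 : ℝ), -2; 1, 0] else !![(2 : ℝ), 0; 0, 1]) = (List.ofFn a).map g := by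
    rw [List.map_ofFn]; rfl
  set l := (List.ofFn a).reverse with hl
  have hcount : l.count true = (Finset.univ.filter fun k => a k = true).card := by
    rw [hl, List.count_reverse, count_ofFn_true]
  obtain ⟨x, y, hxy, hprod⟩ := (key l).1 (by rw [hcount]; exact ht)
  have hlen : l.length = n := by simp [hl]
  rw [hlen] at hxy
  have hprod2 : (List.ofFn fun k : Fin n =>
      if a k then !![(0 : ℝ), -2; 1, 0] else !![(2 : ℝ), 0; 0, 1]).reverse.prod
      = !![0, x; y, 0] := by
    rw [hlist, ← List.map_reverse, ← hl, hprod]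
  have hn : 1 ≤ n := by
    have h1 : 1 ≤ (Finset.univ.filter fun k => a k = true).card :=
      Nat.one_le_iff_ne_zero.mpr (by rintro h0; rw [h0] at ht; simp at ht)
    calc 1 ≤ (Finset.univ.filter fun k => a k = true).card := h1
      _ ≤ Finset.univ.card := Finset.card_filter_le _ _
      _ = n := by simp
  set s := Real.sqrt (2 ^ n) with hs
  have hs2 : s ^ 2 = 2 ^ n := Real.sq_sqrt (by positivity)
  have h2n : (2 : ℝ) ^ 1 ≤ 2 ^ n := pow_le_pow_right₀ (by norm_num) hn
  have hs0 : 0 ≤ s := Real.sqrt_nonneg _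
  have hs1 : 1 < s := by nlinarith
  have hxy' : x * y = -(s ^ 2) := by rw [hs2]; exact hxy
  exact ⟨s, hs1, by rw [hprod2]; exact spec_complex x y s (by linarith) hxy',
    by rw [hprod2]; exact spec_real x y s (by linarith) hxy'⟩
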